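/- Let n ≥ 1 be a natural number, let 0 < k₂ ≤ k₁ be real constants and L > 0, and let λ : Fin (2n) → ℂ be an (n,k₁,k₂,L)-hyperbolic tuple. Then (∏_{i=0}^{n−1} |λ i|) · (1 − exp(−k₂·L))^{2n} ≤ ∏_{i=0}^{2n−1} |1 − λ i| ≤ (∏_{i=0}^{n−1} |λ i|) · (1 + exp(−k₂·L))^{2n}. In particular, for any sequence of (n,k₁,k₂,L_m)-hyperbolic tuples λ^{(m)} with L_m → ∞, the ratio (∏_{i=0}^{n−1} |λ^{(m)} i|) / (∏_{i=0}^{2n−1} |1 − λ^{(m)} i|) tends to 1 as m → ∞. -/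

import Mathlib

open Filter

/-- A tuple `lam : Fin (2*n) → ℂ` is `(n, k₁, k₂, L)`-hyperbolic if its first `n` entries
have modulus in `[exp (k₂·L), exp (k₁·L)]` (expanding eigenvalues) and its last `n` entries
have modulus in `[exp (−k₁·L), exp (−k₂·L)]` (contracting eigenvalues). -/
def IsHyperbolicTuple (n : ℕ) (k₁ k₂ L : ℝ) (lam : Fin (2 * n) → ℂ) : Prop :=
  (∀ i : Fin (2 * n), (i : ℕ) < n →
      Real.exp (k₂ * L) ≤ ‖lam i‖ ∧ ‖lam i‖ ≤ Real.exp (k₁ * L)) ∧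
  (∀ i : Fin (2 * n), n ≤ (i : ℕ) →
      Real.exp (-(k₁ * L)) ≤ ‖lam i‖ ∧ ‖lam i‖ ≤ Real.exp (-(k₂ * L)))

lemma hyp_card_filter (n : ℕ) (hn : 1 ≤ n) :
    (Finset.univ.filter (fun i : Fin (2 * n) => (i : ℕ) < n)).card = n := by
  have h : n < 2 * n := by omega
  have : Finset.univ.filter (fun i : Fin (2 * n) => (i : ℕ) < n) = Finset.Iio ⟨n, h⟩ := by
    ext i; simp [Fin.lt_def]
  simp [this]

lemma hyp_prod_ite (n : ℕ) (hn : 1 ≤ n) (f : Fin (2 * n) → ℝ) (c : ℝ) :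
    (∏ i : Fin (2 * n), (if (i : ℕ) < n then f i * c else c)) =
      (∏ i ∈ Finset.univ.filter (fun i : Fin (2 * n) => (i : ℕ) < n), f i) * c ^ (2 * n) := by
  rw [← Finset.prod_filter_mul_prod_filter_not Finset.univ (fun i : Fin (2 * n) => (i : ℕ) < n)]
  have hc1 : (∏ i ∈ Finset.univ.filter (fun i : Fin (2 * n) => (i : ℕ) < n),
      (if (i : ℕ) < n then f i * c else c)) =
      (∏ i ∈ Finset.univ.filter (fun i : Fin (2 * n) => (i : ℕ) < n), f i) * c ^ n := by
    rw [Finset.prod_congr rfl (fun i hi => if_pos (Finset.mem_filter.mp hi).2),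
      Finset.prod_mul_distrib, Finset.prod_const, hyp_card_filter n hn]
  have hcard2 : (Finset.univ.filter (fun i : Fin (2 * n) => ¬ (i : ℕ) < n)).card = n := by
    have := Finset.card_filter_add_card_filter_not (s := (Finset.univ : Finset (Fin (2 * n))))
      (p := fun i : Fin (2 * n) => (i : ℕ) < n)
    rw [hyp_card_filter n hn] at this
    simp only [Finset.card_univ, Fintype.card_fin] at this
    omega
  have hc2 : (∏ i ∈ Finset.univ.filter (fun i : Fin (2 * n) => ¬ (i : ℕ) < n),
      (if (i : ℕ) < n then f i * c else c)) = c ^ n := by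
    rw [Finset.prod_congr rfl (fun i hi => if_neg (Finset.mem_filter.mp hi).2),
      Finset.prod_const, hcard2]
  rw [hc1, hc2, mul_assoc, ← pow_add]
  ring_nf

lemma hyp_bounds (n : ℕ) (hn : 1 ≤ n) (k₁ k₂ : ℝ) (hk₂ : 0 < k₂) (L : ℝ) (hL : 0 < L)
    (lam : Fin (2 * n) → ℂ) (hlam : IsHyperbolicTuple n k₁ k₂ L lam) :
    (∏ i ∈ Finset.univ.filter (fun i : Fin (2 * n) => (i : ℕ) < n), ‖lam i‖) *
        (1 - Real.exp (-(k₂ * L))) ^ (2 * n) ≤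
      ∏ i : Fin (2 * n), ‖1 - lam i‖ ∧
    ∏ i : Fin (2 * n), ‖1 - lam i‖ ≤
      (∏ i ∈ Finset.univ.filter (fun i : Fin (2 * n) => (i : ℕ) < n), ‖lam i‖) *
        (1 + Real.exp (-(k₂ * L))) ^ (2 * n) := by
  set e := Real.exp (-(k₂ * L)) with he_def
  have he0 : 0 < e := Real.exp_pos _
  have he1 : e < 1 := by
    rw [he_def]
    exact Real.exp_lt_one_iff.mpr (by nlinarith)
  have hmul : e * Real.exp (k₂ * L) = 1 := by
    rw [he_def, ← Real.exp_add]
    simp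
  -- pointwise bounds
  have hlow : ∀ i : Fin (2 * n),
      (if (i : ℕ) < n then ‖lam i‖ * (1 - e) else (1 - e)) ≤
        ‖1 - lam i‖ := by
    intro i
    have habs1 : ‖lam i‖ - 1 ≤ ‖1 - lam i‖ := by
      have := norm_sub_norm_le (lam i) 1
      simpa [norm_sub_rev (lam i) 1] using this
    have habs2 : 1 - ‖lam i‖ ≤ ‖1 - lam i‖ := by
      have := norm_sub_norm_le (1 : ℂ) (lam i)
      simpa using this
    by_cases hi : (i : ℕ) < n
    · rw [if_pos hi]
      have h1 := (hlam.1 i hi).1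
      have hge : 1 ≤ e * ‖lam i‖ := by
        calc (1 : ℝ) = e * Real.exp (k₂ * L) := hmul.symm
        _ ≤ e * ‖lam i‖ := by nlinarith
      nlinarith
    · rw [if_neg hi]
      have h2 := (hlam.2 i (le_of_not_gt hi)).2
      nlinarith
  have hhigh : ∀ i : Fin (2 * n), ‖1 - lam i‖ ≤
      (if (i : ℕ) < n then ‖lam i‖ * (1 + e) else (1 + e)) := by
    intro i
    have habs : ‖1 - lam i‖ ≤ 1 + ‖lam i‖ := by
      have := norm_sub_le (1 : ℂ) (lam i)
      simpa using this
    by_cases hi : (i : ℕ) < n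
    · rw [if_pos hi]
      have h1 := (hlam.1 i hi).1
      have hge : 1 ≤ e * ‖lam i‖ := by
        calc (1 : ℝ) = e * Real.exp (k₂ * L) := hmul.symm
        _ ≤ e * ‖lam i‖ := by nlinarith
      nlinarith
    · rw [if_neg hi]
      have h2 := (hlam.2 i (le_of_not_gt hi)).2
      nlinarith
  constructor
  · rw [← hyp_prod_ite n hn (fun i => ‖lam i‖) (1 - e)]
    refine Finset.prod_le_prod (fun i _ => ?_) (fun i _ => hlow i)
    by_cases hi : (i : ℕ) < n
    · rw [if_pos hi]
      have := norm_nonneg (lam i)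
      nlinarith
    · rw [if_neg hi]; linarith
  · rw [← hyp_prod_ite n hn (fun i => ‖lam i‖) (1 + e)]
    exact Finset.prod_le_prod (fun i _ => norm_nonneg _) (fun i _ => hhigh i)

theorem det_comparable_to_expanding_product (n : ℕ) (hn : 1 ≤ n) (k₁ k₂ : ℝ)
    (hk₂ : 0 < k₂) (hk : k₂ ≤ k₁) :
    (∀ (L : ℝ), 0 < L → ∀ (lam : Fin (2 * n) → ℂ), IsHyperbolicTuple n k₁ k₂ L lam →
      (∏ i ∈ Finset.univ.filter (fun i : Fin (2 * n) => (i : ℕ) < n), ‖lam i‖) *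
          (1 - Real.exp (-(k₂ * L))) ^ (2 * n) ≤
        ∏ i : Fin (2 * n), ‖1 - lam i‖ ∧
      ∏ i : Fin (2 * n), ‖1 - lam i‖ ≤
        (∏ i ∈ Finset.univ.filter (fun i : Fin (2 * n) => (i : ℕ) < n), ‖lam i‖) *
          (1 + Real.exp (-(k₂ * L))) ^ (2 * n)) ∧
    (∀ (L : ℕ → ℝ) (lams : ℕ → Fin (2 * n) → ℂ),
      (∀ m, 0 < L m) → (∀ m, IsHyperbolicTuple n k₁ k₂ (L m) (lams m)) →
      Tendsto L atTop atTop →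
      Tendsto (fun m =>
          (∏ i ∈ Finset.univ.filter (fun i : Fin (2 * n) => (i : ℕ) < n),
              ‖lams m i‖) /
            ∏ i : Fin (2 * n), ‖1 - lams m i‖)
        atTop (nhds 1)) := by
  refine ⟨fun L hL lam hlam => hyp_bounds n hn k₁ k₂ hk₂ L hL lam hlam, ?_⟩
  intro L lams hLpos hlams hLtop
  set e : ℕ → ℝ := fun m => Real.exp (-(k₂ * L m)) with he_def
  set P : ℕ → ℝ := fun m => ∏ i ∈ Finset.univ.filter (fun i : Fin (2 * n) => (i : ℕ) < n),
    ‖lams m i‖ with hP_def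
  set D : ℕ → ℝ := fun m => ∏ i : Fin (2 * n), ‖1 - lams m i‖ with hD_def
  have he0 : ∀ m, 0 < e m := fun m => Real.exp_pos _
  have he1 : ∀ m, e m < 1 := fun m =>
    Real.exp_lt_one_iff.mpr (by nlinarith [hLpos m, hk₂])
  have hP : ∀ m, 0 < P m := by
    intro m
    refine Finset.prod_pos (fun i hi => ?_)
    have := ((hlams m).1 i (Finset.mem_filter.mp hi).2).1
    exact lt_of_lt_of_le (Real.exp_pos _) this
  have hbounds := fun m => hyp_bounds n hn k₁ k₂ hk₂ (L m) (hLpos m) (lams m) (hlams m)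
  have hD : ∀ m, 0 < D m := by
    intro m
    have h := (hbounds m).1
    have : 0 < P m * (1 - e m) ^ (2 * n) :=
      mul_pos (hP m) (pow_pos (by linarith [he1 m]) _)
    exact lt_of_lt_of_le this h
  -- squeeze
  have hlow : ∀ m, ((1 + e m) ^ (2 * n))⁻¹ ≤ P m / D m := by
    intro m
    rw [inv_eq_one_div, div_le_div_iff₀ (by positivity) (hD m)]
    have := (hbounds m).2
    linarith
  have hhigh : ∀ m, P m / D m ≤ ((1 - e m) ^ (2 * n))⁻¹ := by
    intro m
    have hpos : (0:ℝ) < (1 - e m) ^ (2 * n) := pow_pos (by linarith [he1 m]) _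
    rw [inv_eq_one_div, div_le_div_iff₀ (hD m) hpos]
    have := (hbounds m).1
    linarith
  have he_tendsto : Tendsto e atTop (nhds 0) := by
    apply Real.tendsto_exp_atBot.comp
    exact tendsto_neg_atTop_atBot.comp (hLtop.const_mul_atTop hk₂)
  have h1 : Tendsto (fun m => ((1 + e m) ^ (2 * n))⁻¹) atTop (nhds 1) := by
    have : Tendsto (fun m => (1 + e m) ^ (2 * n)) atTop (nhds ((1 + 0) ^ (2 * n))) :=
      (tendsto_const_nhds.add he_tendsto).pow _
    simpa using this.inv₀ (by norm_num)
  have h2 : Tendsto (fun m => ((1 - e m) ^ (2 * n))⁻¹) atTop (nhds 1) := by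
    have : Tendsto (fun m => (1 - e m) ^ (2 * n)) atTop (nhds ((1 - 0) ^ (2 * n))) :=
      (tendsto_const_nhds.sub he_tendsto).pow _
    simpa using this.inv₀ (by norm_num)
  exact tendsto_of_tendsto_of_tendsto_of_le_of_le h1 h2 hlow hhigh
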